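/- (Γ-liminf for the rescaled dissipation distance on matrices.) Let R be the dissipation function (R = R^dev on deviatoric matrices, ∞ otherwise) and D the induced dissipation distance, and suppose the effective-domain bounds D(P,Q) ≤ c₆ and D(I,P) ≤ c₆|P−I| hold for P,Q ∈ K. Define D_ε(z₁,z₂) := ε⁻¹D(I+εz₁,I+εz₂) and D₀(z₁,z₂) := R(z₂−z₁). Then for every (z,ẑ) ∈ ℝ^{d×d}×ℝ^{d×d} and every sequence (z_ε,ẑ_ε) → (z,ẑ): D₀(z,ẑ) ≤ liminf_{ε→0} D_ε(z_ε,ẑ_ε). -/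

import Mathlib

open MeasureTheory Matrix Filter Set Metric
open scoped BigOperators ENNReal NNReal Topology RealInnerProductSpace

noncomputable section

namespace LinPlast

/-- Euclidean space `ℝ^d`. -/
abbrev E (d : ℕ) := EuclideanSpace ℝ (Fin d)

/-- Square `d×d` real matrices. -/
abbrev Mat (d : ℕ) := Matrix (Fin d) (Fin d) ℝ

attribute [local instance] Matrix.frobeniusNormedAddCommGroup Matrix.frobeniusNormedSpace

variable {d : ℕ}

/-- Frobenius inner product `A : B`. -/
def matInner (A B : Mat d) : ℝ := ∑ i, ∑ j, A i j * B i j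

/-- Fourth order tensors. -/
abbrev Tens (d : ℕ) := Fin d → Fin d → Fin d → Fin d → ℝ

/-- Application of a 4-tensor to a matrix, `(𝕋A)_{ij} = ∑_{kl} 𝕋_{ijkl} A_{kl}`. -/
def tApp (T : Tens d) (A : Mat d) : Mat d := Matrix.of fun i j => ∑ k, ∑ l, T i j k l * A k l

/-- The quadratic form `|A|²_𝕋 := ½ A : 𝕋A`. -/
def qForm (T : Tens d) (A : Mat d) : ℝ := (1 / 2) * matInner A (tApp T A)

/-- A symmetric (`𝕋_{ijkl} = 𝕋_{klij}`) positive semidefinite 4-tensor. -/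
structure IsGoodTens (T : Tens d) : Prop where
  symm : ∀ i j k l, T i j k l = T k l i j
  psd : ∀ A : Mat d, 0 ≤ matInner A (tApp T A)

/-- `SL(d)`: matrices of determinant one.-/
def SLg (d : ℕ) : Set (Mat d) := {P | P.det = 1}

/-- `SO(d)`: rotations. -/
def SOg (d : ℕ) : Set (Mat d) := {R | R.det = 1 ∧ Rᵀ * R = 1 ∧ R * Rᵀ = 1}

/-- `GL₊(d)`: matrices of positive determinant. -/
def GLp (d : ℕ) : Set (Mat d) := {F | 0 < F.det}

/-- Deviatoric (symmetric and trace-free) matrices. -/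
def Dev (d : ℕ) : Set (Mat d) := {A | Aᵀ = A ∧ A.trace = 0}

/-- Symmetric part of a matrix. -/
def msym (A : Mat d) : Mat d := (2⁻¹ : ℝ) • (A + Aᵀ)

/-- Matrix exponential. -/
def mexp (A : Mat d) : Mat d := NormedSpace.exp A

/-- The dissipation-potential assumptions: `R^dev` is nonnegative, convex, positively
1-homogeneous and comparable to the norm on the deviatoric matrices. -/
structure DissAss (d : ℕ) (Rdev : Mat d → ℝ) (c₄ c₅ : ℝ) : Prop where
  c4pos : 0 < c₄
  c5pos : 0 < c₅
  nonneg : ∀ P ∈ Dev d, 0 ≤ Rdev P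
  convexOn : ConvexOn ℝ (Dev d) Rdev
  hom : ∀ a : ℝ, 0 ≤ a → ∀ P ∈ Dev d, Rdev (a • P) = a * Rdev P
  lb : ∀ P ∈ Dev d, c₄ * ‖P‖ ≤ Rdev P
  ub : ∀ P ∈ Dev d, Rdev P ≤ c₅ * ‖P‖

-- The extended dissipation potential `R`, equal to `R^dev` on deviatoric matrices and
-- `∞` otherwise (with values in `[0,∞]`).
open scoped Classical in
def Rext (Rdev : Mat d → ℝ) (P : Mat d) : ℝ≥0∞ :=
  if P ∈ Dev d then ENNReal.ofReal (Rdev P) else ⊤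

/-- The dissipation distance `D(I,P̂)`: infimum of `∫₀¹ R(Ṗ P⁻¹) dt` over `C¹` paths
from `I` to `P̂`. -/
def DistI (Rdev : Mat d → ℝ) (Phat : Mat d) : ℝ≥0∞ :=
  ⨅ (P : ℝ → Mat d) (_ : ContDiff ℝ 1 P) (_ : P 0 = 1) (_ : P 1 = Phat),
    ∫⁻ t in Set.Icc (0 : ℝ) 1, Rext Rdev (deriv P t * (P t)⁻¹)

/-- The dissipation distance `D(P,P̂) = D(I, P̂ P⁻¹)` (equal to `∞` if `P` is not
invertible, since then `P⁻¹ = 0` and no admissible finite-cost path exists). -/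
def DistD (Rdev : Mat d → ℝ) (P Phat : Mat d) : ℝ≥0∞ := DistI Rdev (Phat * P⁻¹)

/-- The gradient `∇u(x)` of a vector field, as a matrix: `(∇u)_{ij} = ∂_j u_i`. -/
def grad (u : E d → E d) (x : E d) : Mat d :=
  Matrix.of fun i j => fderiv ℝ u x (EuclideanSpace.single j 1) i

/-- Membership in `H¹(Ω;ℝ^d)`: differentiable on `Ω`, with the function and its gradient
square integrable on `Ω`. -/
structure MemH1 (Ω : Set (E d)) (u : E d → E d) : Prop where
  diff : ∀ x ∈ Ω, DifferentiableAt ℝ u x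
  l2 : MemLp u 2 (volume.restrict Ω)
  gradl2 : MemLp (grad u) 2 (volume.restrict Ω)

/-- The space `U = {u ∈ H¹(Ω;ℝ^d) : u = 0 on Γ}`. -/
def memU (Ω Γ : Set (E d)) (u : E d → E d) : Prop :=
  MemH1 Ω u ∧ ∀ x ∈ Γ, u x = 0

/-- The space `Z = L²(Ω;ℝ^{d×d})`. -/
def memZ (Ω : Set (E d)) (z : E d → Mat d) : Prop :=
  MemLp z 2 (volume.restrict Ω)

/-- Membership in the state space `Q = U × Z`. -/
def memQ (Ω Γ : Set (E d)) (u : E d → E d) (z : E d → Mat d) : Prop :=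
  memU Ω Γ u ∧ memZ Ω z

/-- Weak convergence in `L²(Ω;ℝ^{d×d})`. -/
def WeakL2Mat (Ω : Set (E d)) (z : ℕ → E d → Mat d) (z₀ : E d → Mat d) : Prop :=
  ∀ g : E d → Mat d, MemLp g 2 (volume.restrict Ω) →
    Tendsto (fun n => ∫ x in Ω, matInner (z n x) (g x)) atTop
      (𝓝 (∫ x in Ω, matInner (z₀ x) (g x)))

/-- Weak convergence in `L²(Ω;ℝ^d)`. -/
def WeakL2Vec (Ω : Set (E d)) (u : ℕ → E d → E d) (u₀ : E d → E d) : Prop :=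
  ∀ g : E d → E d, MemLp g 2 (volume.restrict Ω) →
    Tendsto (fun n => ∫ x in Ω, ⟪u n x, g x⟫) atTop (𝓝 (∫ x in Ω, ⟪u₀ x, g x⟫))

/-- Weak convergence in `H¹(Ω;ℝ^d)`. -/
def WeakH1 (Ω : Set (E d)) (u : ℕ → E d → E d) (u₀ : E d → E d) : Prop :=
  WeakL2Vec Ω u u₀ ∧ WeakL2Mat Ω (fun n => grad (u n)) (grad u₀)

/-- Weak convergence in `Q = U × Z`. -/
def WeakQ (Ω : Set (E d)) (u : ℕ → E d → E d) (z : ℕ → E d → Mat d)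
    (u₀ : E d → E d) (z₀ : E d → Mat d) : Prop :=
  WeakH1 Ω u u₀ ∧ WeakL2Mat Ω z z₀

/-- A bounded open connected set with Lipschitz boundary: near every boundary point,
after choosing a unit direction `v`, the set is the open hypograph of a Lipschitz
function over the hyperplane orthogonal to `v`. -/
structure IsLipschitzDomain (Ω : Set (E d)) : Prop where
  open' : IsOpen Ω
  bounded : Bornology.IsBounded Ω
  connected : IsConnected Ω
  lipBoundary : ∀ x ∈ frontier Ω, ∃ r > (0 : ℝ), ∃ v : E d, ‖v‖ = 1 ∧
    ∃ L : ℝ≥0, ∃ φ : E d → ℝ, LipschitzWith L φ ∧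
      ∀ y ∈ Metric.ball x r, (y ∈ Ω ↔ ⟪y, v⟫ < φ (y - ⟪y, v⟫ • v))

/-- The Dirichlet boundary part `Γ`: a relatively open subset of `∂Ω` with positive
`(d-1)`-dimensional Hausdorff measure. -/
structure IsDirichletPart (Ω Γ : Set (E d)) : Prop where
  sub : Γ ⊆ frontier Ω
  relOpen : ∃ V : Set (E d), IsOpen V ∧ Γ = V ∩ frontier Ω
  posMeas : 0 < μH[(d : ℝ) - 1] Γ

/-- The matrix of first derivatives `∂_F W(F)` of a real function of a matrix. -/
def matGrad (W : Mat d → ℝ) (F : Mat d) : Mat d :=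
  Matrix.of fun i j => fderiv ℝ W F (Matrix.single i j 1)

/-- The assumptions on the elastic energy density `W_el : ℝ^{d×d} → [0,∞]`:
finite and `C¹` on `GL₊(d)` and `≡ ∞` outside; frame indifference; nondegeneracy
`W_el(F) ≥ c₁ dist²(F,SO(d))`; control of the Mandel tensor `Fᵀ ∂_F W_el(F)`;
and quadratic expansion `|·|²_ℂ` around the identity. -/
structure ElAss (d : ℕ) (Wel : Mat d → ℝ≥0∞) (c₁ c₂ c₃ : ℝ) (Cten : Tens d) : Prop where
  c1pos : 0 < c₁
  c2pos : 0 < c₂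
  finiteOn : ∀ F ∈ GLp d, Wel F ≠ ⊤
  eqTopOff : ∀ F ∉ GLp d, Wel F = ⊤
  smooth : ContDiffOn ℝ 1 (fun F => (Wel F).toReal) (GLp d)
  frame : ∀ R ∈ SOg d, ∀ F ∈ GLp d, Wel (R * F) = Wel F
  lowerBound : ∀ F ∈ GLp d,
    ENNReal.ofReal (c₁ * (Metric.infDist F (SOg d)) ^ 2) ≤ Wel F
  mandel : ∀ F ∈ GLp d,
    ‖Fᵀ * matGrad (fun G => (Wel G).toReal) F‖ ≤ c₂ * ((Wel F).toReal + c₃)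
  tens : IsGoodTens Cten
  quadExp : ∀ δ > (0 : ℝ), ∃ cδ > (0 : ℝ), ∀ A : Mat d, ‖A‖ < cδ →
    Wel (1 + A) ≠ ⊤ ∧ |(Wel (1 + A)).toReal - qForm Cten A| ≤ δ * qForm Cten A

/-- The assumptions on the hardening energy density `W_h`: it coincides with a
locally Lipschitz, quadratically expandable `W̃_h` on a compact `K ⊆ SL(d)` containing
a relative neighborhood of `I`, is `≡ ∞` outside `K`, and is coercive. -/
structure HardAss (d : ℕ) (Wh : Mat d → ℝ≥0∞) (Wth : Mat d → ℝ) (K : Set (Mat d))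
    (c₃ : ℝ) (Hten : Tens d) : Prop where
  c3pos : 0 < c₃
  eqOn : ∀ P ∈ K, Wh P = ENNReal.ofReal (Wth P)
  eqTopOff : ∀ P ∉ K, Wh P = ⊤
  nonneg : ∀ P ∈ K, 0 ≤ Wth P
  compact : IsCompact K
  subSL : K ⊆ SLg d
  nbhdI : ∃ ρ > (0 : ℝ), {P ∈ SLg d | ‖P - 1‖ < ρ} ⊆ K
  locLip : LocallyLipschitz Wth
  tens : IsGoodTens Hten
  quadExp : ∀ δ > (0 : ℝ), ∃ cδ > (0 : ℝ), ∀ A : Mat d, ‖A‖ < cδ →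
    |Wth (1 + A) - qForm Hten A| ≤ δ * qForm Hten A
  coercive : ∀ A : Mat d, ENNReal.ofReal (c₃ * ‖A‖ ^ 2) ≤ Wh (1 + A)

/-- The rescaled finite-plasticity stored energy
`W_ε(u,z) = ε⁻² ∫_Ω W_el((I+ε∇u)(I+εz)⁻¹) dx + ε⁻² ∫_Ω W_h(I+εz) dx`. -/
def Weps (Ω : Set (E d)) (Wel Wh : Mat d → ℝ≥0∞) (ε : ℝ)
    (u : E d → E d) (z : E d → Mat d) : ℝ≥0∞ :=
  ENNReal.ofReal (ε⁻¹) ^ 2 *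
    ((∫⁻ x in Ω, Wel ((1 + ε • grad u x) * (1 + ε • z x)⁻¹)) +
      ∫⁻ x in Ω, Wh (1 + ε • z x))

/-- The linearized stored energy `W₀(u,z) = ∫_Ω |∇u^sym − z^sym|²_ℂ + ∫_Ω |z|²_ℍ`. -/
def W0 (Ω : Set (E d)) (Cten Hten : Tens d)
    (u : E d → E d) (z : E d → Mat d) : ℝ≥0∞ :=
  (∫⁻ x in Ω, ENNReal.ofReal (qForm Cten (msym (grad u x) - msym (z x)))) +
    ∫⁻ x in Ω, ENNReal.ofReal (qForm Hten (z x))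

/-- A generalized loading `ℓ ∈ W^{1,1}(0,T;U')`, described by its values and its time
derivative `ℓ'`: both are linear in `u`, `ℓ` is the integral of `ℓ'`, and `ℓ(t)`, `ℓ'(t)`
are bounded by `g(t)` times the `H¹(Ω)`-norm, with `g ∈ L¹(0,T)`. -/
structure Loading (Ω : Set (E d)) (T : ℝ) (ℓ ℓ' : ℝ → (E d → E d) → ℝ) : Prop where
  lin : ∀ t ∈ Icc (0 : ℝ) T, IsLinearMap ℝ (ℓ t) ∧ IsLinearMap ℝ (ℓ' t)
  fund : ∀ u : E d → E d, ∀ t ∈ Icc (0 : ℝ) T,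
    (IntervalIntegrable (fun s => ℓ' s u) volume 0 t) ∧
    ℓ t u = ℓ 0 u + ∫ s in (0 : ℝ)..t, ℓ' s u
  bound : ∃ g : ℝ → ℝ, IntegrableOn g (Icc (0 : ℝ) T) ∧
    ∀ t ∈ Icc (0 : ℝ) T, ∀ u : E d → E d,
      |ℓ t u| ≤ g t * Real.sqrt ((∫ x in Ω, ‖u x‖ ^ 2) + ∫ x in Ω, ‖grad u x‖ ^ 2) ∧
      |ℓ' t u| ≤ g t * Real.sqrt ((∫ x in Ω, ‖u x‖ ^ 2) + ∫ x in Ω, ‖grad u x‖ ^ 2)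

/-- Total energy `E_ε(t,u,z) = W_ε(u,z) − ⟨ℓ(t),u⟩`, with values in `(-∞,∞]`. -/
def Eeps (Ω : Set (E d)) (Wel Wh : Mat d → ℝ≥0∞) (ℓ : ℝ → (E d → E d) → ℝ)
    (ε t : ℝ) (u : E d → E d) (z : E d → Mat d) : EReal :=
  (Weps Ω Wel Wh ε u z : EReal) - ((ℓ t u : ℝ) : EReal)

/-- Linearized total energy `E₀(t,u,z) = W₀(u,z) − ⟨ℓ(t),u⟩`. -/
def E0 (Ω : Set (E d)) (Cten Hten : Tens d)
    (ℓ : ℝ → (E d → E d) → ℝ) (t : ℝ) (u : E d → E d) (z : E d → Mat d) : EReal :=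
  (W0 Ω Cten Hten u z : EReal) - ((ℓ t u : ℝ) : EReal)

/-- The rescaled dissipation functional `𝒟_ε(z₁,z₂) = ε⁻¹ ∫_Ω D(I+εz₁, I+εz₂) dx`. -/
def Deps (Ω : Set (E d)) (Rdev : Mat d → ℝ) (ε : ℝ)
    (z₁ z₂ : E d → Mat d) : ℝ≥0∞ :=
  ENNReal.ofReal (ε⁻¹) * ∫⁻ x in Ω, DistD Rdev (1 + ε • z₁ x) (1 + ε • z₂ x)

/-- The linearized dissipation functional `𝒟₀(z₁,z₂) = ∫_Ω R(z₂ − z₁) dx`. -/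
def D0 (Ω : Set (E d)) (Rdev : Mat d → ℝ) (z₁ z₂ : E d → Mat d) : ℝ≥0∞ :=
  ∫⁻ x in Ω, Rext Rdev (z₂ x - z₁ x)

/-- The total dissipation `Diss_𝒟(z;[0,t])`: supremum over all partitions
`0 = τ₀ ≤ … ≤ τ_N = t` of `∑ 𝒟(z(τ_{i-1}), z(τ_i))`. -/
def DissOn (Dd : (E d → Mat d) → (E d → Mat d) → ℝ≥0∞)
    (z : ℝ → E d → Mat d) (t : ℝ) : ℝ≥0∞ :=
  ⨆ (N : ℕ) (τ : Fin (N + 1) → ℝ) (_ : Monotone τ) (_ : τ 0 = 0)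
    (_ : τ (Fin.last N) = t),
      ∑ i : Fin N, Dd (z (τ i.castSucc)) (z (τ i.succ))

/-- Stability of a state `(u,z)` at a given time for the energy `Ee` and dissipation `Dd`. -/
def Stable (Qmem : (E d → E d) → (E d → Mat d) → Prop)
    (Ee : (E d → E d) → (E d → Mat d) → EReal)
    (Dd : (E d → Mat d) → (E d → Mat d) → ℝ≥0∞)
    (u : E d → E d) (z : E d → Mat d) : Prop :=
  Ee u z < ⊤ ∧ ∀ uh zh, Qmem uh zh → Ee u z ≤ Ee uh zh + (Dd z zh : EReal)

/-- An energetic solution on `[0,T]` of the rate-independent system given by the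
(time-dependent) energy `Ee`, dissipation `Dd`, power `ℓ'` and initial datum `(u0,z0)`:
global stability and energy balance hold at every time. -/
structure IsEnergeticSol (Qmem : (E d → E d) → (E d → Mat d) → Prop) (T : ℝ)
    (Ee : ℝ → (E d → E d) → (E d → Mat d) → EReal)
    (Dd : (E d → Mat d) → (E d → Mat d) → ℝ≥0∞)
    (ℓ' : ℝ → (E d → E d) → ℝ) (u0 : E d → E d) (z0 : E d → Mat d)
    (u : ℝ → E d → E d) (z : ℝ → E d → Mat d) : Prop where
  init_u : u 0 = u0
  init_z : z 0 = z0
  mem : ∀ t ∈ Icc (0 : ℝ) T, Qmem (u t) (z t)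
  power_int : IntegrableOn (fun s => ℓ' s (u s)) (Icc (0 : ℝ) T)
  stable : ∀ t ∈ Icc (0 : ℝ) T, Stable Qmem (Ee t) Dd (u t) (z t)
  balance : ∀ t ∈ Icc (0 : ℝ) T,
    Ee t (u t) (z t) + (DissOn Dd z t : EReal)
      = Ee 0 u0 z0 - ((∫ s in (0 : ℝ)..t, ℓ' s (u s) : ℝ) : EReal)


/-! ### Auxiliary lemmas for the Γ-liminf proof -/

instance matContinuousENorm : ContinuousENorm (Mat d) where
  continuous_enorm := by exact (SeminormedAddGroup.toContinuousENorm (E := Mat d)).continuous_enorm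

section GammaLiminfAux

attribute [local instance] Matrix.frobeniusNormedRing

variable {d : ℕ}

lemma devZero_mem : (0 : Mat d) ∈ Dev d := ⟨Matrix.transpose_zero, by simp⟩

lemma devAdd_mem {A B : Mat d} (hA : A ∈ Dev d) (hB : B ∈ Dev d) : A + B ∈ Dev d :=
  ⟨by rw [Matrix.transpose_add, hA.1, hB.1], by rw [Matrix.trace_add, hA.2, hB.2, add_zero]⟩

lemma devSub_mem {A B : Mat d} (hA : A ∈ Dev d) (hB : B ∈ Dev d) : A - B ∈ Dev d :=
  ⟨by rw [Matrix.transpose_sub, hA.1, hB.1], by rw [Matrix.trace_sub, hA.2, hB.2, sub_zero]⟩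

lemma devSmul_mem (c : ℝ) {A : Mat d} (hA : A ∈ Dev d) : c • A ∈ Dev d :=
  ⟨by rw [Matrix.transpose_smul, hA.1], by rw [Matrix.trace_smul, hA.2, smul_zero]⟩

lemma devClosed : IsClosed (Dev d) := by
  have h1 : IsClosed {A : Mat d | Aᵀ = A} :=
    isClosed_eq (continuous_id.matrix_transpose) continuous_id
  have h2 : IsClosed {A : Mat d | A.trace = 0} :=
    isClosed_eq (continuous_id.matrix_trace) continuous_const
  have : Dev d = {A : Mat d | Aᵀ = A} ∩ {A : Mat d | A.trace = 0} := by
    ext A; simp [Dev, Set.mem_inter_iff]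
  rw [this]; exact h1.inter h2

variable {Rdev : Mat d → ℝ} {c₄ c₅ : ℝ}

lemma Rdev_tri (hR : DissAss d Rdev c₄ c₅) {A B : Mat d} (hA : A ∈ Dev d) (hB : B ∈ Dev d) :
    Rdev (A + B) ≤ Rdev A + Rdev B := by
  have h := hR.convexOn.2 hA hB (by norm_num : (0:ℝ) ≤ 1/2) (by norm_num : (0:ℝ) ≤ 1/2)
    (by norm_num)
  have h2 : (1/2 : ℝ) • A + (1/2 : ℝ) • B = (1/2 : ℝ) • (A + B) := by rw [smul_add]
  rw [h2, hR.hom _ (by norm_num) _ (devAdd_mem hA hB)] at h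
  simp only [smul_eq_mul] at h
  linarith

lemma Rdev_lip (hR : DissAss d Rdev c₄ c₅) {A B : Mat d} (hA : A ∈ Dev d) (hB : B ∈ Dev d) :
    Rdev A ≤ Rdev B + c₅ * ‖A - B‖ := by
  have h1 : Rdev A = Rdev (B + (A - B)) := by rw [add_sub_cancel]
  rw [h1]
  exact le_trans (Rdev_tri hR hB (devSub_mem hA hB))
    (add_le_add_right (hR.ub _ (devSub_mem hA hB)) _)

lemma Rdev_contOn (hR : DissAss d Rdev c₄ c₅) : ContinuousOn Rdev (Dev d) := by
  refine LipschitzOnWith.continuousOn (K := Real.toNNReal c₅) ?_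
  rw [lipschitzOnWith_iff_dist_le_mul]
  intro x hx y hy
  rw [Real.dist_eq, dist_eq_norm, Real.coe_toNNReal _ hR.c5pos.le]
  rw [abs_sub_le_iff]
  constructor
  · have := Rdev_lip hR hx hy; linarith
  · have := Rdev_lip hR hy hx
    rw [norm_sub_rev] at this; linarith

/-- The linear projection onto deviatoric matrices. -/
def devProj (A : Mat d) : Mat d := msym A - ((d : ℝ)⁻¹ * A.trace) • (1 : Mat d)

lemma msym_trace (A : Mat d) : (msym A).trace = A.trace := by
  simp [msym, Matrix.trace_smul, Matrix.trace_add, Matrix.trace_transpose, smul_eq_mul]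
  ring

lemma msym_transpose (A : Mat d) : (msym A)ᵀ = msym A := by
  simp [msym, Matrix.transpose_smul, Matrix.transpose_add, Matrix.transpose_transpose, add_comm]

lemma devProj_mem (hd : 0 < d) (A : Mat d) : devProj A ∈ Dev d := by
  constructor
  · rw [devProj, Matrix.transpose_sub, Matrix.transpose_smul, Matrix.transpose_one,
      msym_transpose]
  · rw [devProj, Matrix.trace_sub, Matrix.trace_smul, msym_trace, Matrix.trace_one, Fintype.card_fin,
      smul_eq_mul]
    have hdne : (d : ℝ) ≠ 0 := Nat.cast_ne_zero.mpr hd.ne'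
    field_simp
    simp

lemma devProj_eq_self {A : Mat d} (hA : A ∈ Dev d) : devProj A = A := by
  rw [devProj, hA.2, mul_zero, zero_smul, sub_zero, msym, hA.1, ← two_smul ℝ A, smul_smul]
  norm_num

lemma devProj_cont : Continuous (devProj (d := d)) := by
  refine Continuous.sub ?_ (Continuous.smul (f := fun A : Mat d => ((d:ℝ)⁻¹ * A.trace)) (g := fun _ : Mat d => (1 : Mat d)) ?_ continuous_const)
  · exact ((continuous_id.add continuous_id.matrix_transpose).const_smul (2⁻¹ : ℝ))
  · exact continuous_const.mul continuous_id.matrix_trace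

lemma isUnit_of_norm_one_sub_lt {X : Mat d} (h : ‖1 - X‖ < 1) : IsUnit X := by
  haveI : CompleteSpace (Mat d) := inferInstance
  exact ⟨Units.oneSub (1 - X) h, sub_sub_cancel 1 X⟩

/-- Core quantitative estimate: a finite-cost path starting at the identity with small cost
stays invertible, and its endpoint displacement is close to a deviatoric matrix of small
`Rdev`-value. -/
lemma core (hd : 0 < d) (hR : DissAss d Rdev c₄ c₅)
    (P : ℝ → Mat d) (hP : ContDiff ℝ 1 P) (hP0 : P 0 = 1)
    (r : ℝ) (hr : 0 ≤ r) (hsmall : r / c₄ ≤ 1/6)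
    (hcost : ∫⁻ t in Set.Icc (0:ℝ) 1, Rext Rdev (deriv P t * (P t)⁻¹) ≤ ENNReal.ofReal r) :
    ∃ A ∈ Dev d, Rdev A ≤ r ∧ ‖A - (P 1 - 1)‖ ≤ (3/2) * (r/c₄)^2 := by
  letI : MeasurableSpace (Mat d) := borel _
  haveI : BorelSpace (Mat d) := ⟨rfl⟩
  set ξ : ℝ → Mat d := fun t => deriv P t * (P t)⁻¹ with hξdef
  set η : ℝ → Mat d := fun t => devProj (ξ t) with hηdef
  have hPc : Continuous P := hP.continuous
  have hP' : Continuous (deriv P) := hP.continuous_deriv le_rfl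
  have hdet : Continuous fun t => (P t).det := hPc.matrix_det
  have hadj : Continuous fun t => (P t).adjugate := hPc.matrix_adjugate
  have hrc : 0 ≤ r / c₄ := div_nonneg hr hR.c4pos.le
  -- measurability of ξ
  have hinv_eq : (fun t => (P t)⁻¹) = fun t => ((P t).det)⁻¹ • (P t).adjugate := by
    funext t; rw [Matrix.inv_def, Ring.inverse_eq_inv']
  have hmeas_inv : Measurable fun t => (P t)⁻¹ := by
    rw [hinv_eq]; exact (hdet.measurable.inv).smul hadj.measurable
  have hmeasξ : Measurable ξ := by
    haveI : SecondCountableTopology (Mat d) := by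
      exact (inferInstance : SecondCountableTopology (Fin d → Fin d → ℝ))
    exact hP'.measurable.mul hmeas_inv
  -- almost everywhere the rate is deviatoric
  have haeDev : ∀ᵐ t ∂(volume.restrict (Set.Icc (0:ℝ) 1)), ξ t ∈ Dev d := by
    have hms : MeasurableSet {t : ℝ | ξ t ∈ Dev d} := hmeasξ devClosed.measurableSet
    rw [MeasureTheory.ae_iff]
    by_contra hne
    have hsub : {t : ℝ | ξ t ∈ Dev d}ᶜ ∩ Set.Icc 0 1 ⊆ Set.Icc (0:ℝ) 1 :=
      Set.inter_subset_right
    have h1 : ∫⁻ t in {t : ℝ | ξ t ∈ Dev d}ᶜ ∩ Set.Icc 0 1, Rext Rdev (ξ t) ≤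
        ENNReal.ofReal r := le_trans (MeasureTheory.lintegral_mono_set hsub) hcost
    have h2 : ∫⁻ t in {t : ℝ | ξ t ∈ Dev d}ᶜ ∩ Set.Icc 0 1, Rext Rdev (ξ t) =
        ∫⁻ _ in {t : ℝ | ξ t ∈ Dev d}ᶜ ∩ Set.Icc 0 1, (⊤ : ℝ≥0∞) := by
      refine MeasureTheory.setLIntegral_congr_fun (hms.compl.inter measurableSet_Icc)
        (fun t ht => ?_)
      simp only [Rext]
      exact if_neg ht.1
    rw [h2, MeasureTheory.setLIntegral_const] at h1
    have hmeq : volume ({t : ℝ | ξ t ∈ Dev d}ᶜ ∩ Set.Icc 0 1) ≠ 0 := by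
      rw [show {a : ℝ | ξ a ∉ Dev d} = {t : ℝ | ξ t ∈ Dev d}ᶜ from rfl,
        MeasureTheory.Measure.restrict_apply hms.compl] at hne
      exact hne
    rw [ENNReal.top_mul hmeq] at h1
    exact absurd h1 (by simp)
  -- key quantitative estimate on subintervals where `P` is invertible
  have hderiv_eq : ∀ t : ℝ, IsUnit (P t) → deriv P t = ξ t + ξ t * (P t - 1) := by
    intro t hu
    have hdet' : IsUnit (P t).det := (Matrix.isUnit_iff_isUnit_det _).mp hu
    have h1 : ξ t * P t = deriv P t := Matrix.nonsing_inv_mul_cancel_right _ _ hdet'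
    rw [mul_sub, mul_one, ← h1]; abel
  have key : ∀ t₁ ∈ Set.Icc (0:ℝ) 1,
      (∀ t ∈ Set.Icc (0:ℝ) t₁, IsUnit (P t) ∧ ‖P t - 1‖ < 1/2) →
      (∫ t in Set.Icc (0:ℝ) t₁, ‖ξ t‖) ≤ r / c₄ ∧ ‖P t₁ - 1‖ ≤ (3/2) * (r/c₄) := by
    intro t₁ ht₁ hunit
    have hcontinv : ContinuousOn (fun t => (P t)⁻¹) (Set.Icc 0 t₁) := by
      have h := (hdet.continuousOn.inv₀ (fun t ht =>
        isUnit_iff_ne_zero.mp ((Matrix.isUnit_iff_isUnit_det _).mp (hunit t ht).1))).smul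
        hadj.continuousOn
      exact h.congr fun t _ => by rw [Matrix.inv_def, Ring.inverse_eq_inv']; rfl
    have hcontξ : ContinuousOn ξ (Set.Icc 0 t₁) := hP'.continuousOn.mul hcontinv
    have hInt : IntegrableOn (fun t => ‖ξ t‖) (Set.Icc (0:ℝ) t₁) :=
      ContinuousOn.integrableOn_compact isCompact_Icc hcontξ.norm
    have hIntξ : IntegrableOn ξ (Set.Icc (0:ℝ) t₁) :=
      ContinuousOn.integrableOn_compact isCompact_Icc hcontξ
    have hae' : ∀ᵐ t ∂(volume.restrict (Set.Icc (0:ℝ) t₁)), ξ t ∈ Dev d :=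
      ae_restrict_of_ae_restrict_of_subset (Set.Icc_subset_Icc le_rfl ht₁.2) haeDev
    have hL : ∫ t in Set.Icc (0:ℝ) t₁, ‖ξ t‖ ≤ r / c₄ := by
      have h1 : ENNReal.ofReal (∫ t in Set.Icc (0:ℝ) t₁, c₄ * ‖ξ t‖) =
          ∫⁻ t in Set.Icc (0:ℝ) t₁, ENNReal.ofReal (c₄ * ‖ξ t‖) := by
        refine MeasureTheory.ofReal_integral_eq_lintegral_ofReal (hInt.const_mul c₄) ?_
        exact Filter.Eventually.of_forall fun t => mul_nonneg hR.c4pos.le (norm_nonneg _)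
      have h2 : ∫⁻ t in Set.Icc (0:ℝ) t₁, ENNReal.ofReal (c₄ * ‖ξ t‖) ≤
          ∫⁻ t in Set.Icc (0:ℝ) t₁, Rext Rdev (ξ t) := by
        refine MeasureTheory.lintegral_mono_ae (hae'.mono fun t ht => ?_)
        simp only [Rext, if_pos ht]
        exact ENNReal.ofReal_le_ofReal (hR.lb _ ht)
      have h3 : ∫⁻ t in Set.Icc (0:ℝ) t₁, Rext Rdev (ξ t) ≤ ENNReal.ofReal r :=
        le_trans (MeasureTheory.lintegral_mono_set (Set.Icc_subset_Icc le_rfl ht₁.2)) hcost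
      have h4 : (∫ t in Set.Icc (0:ℝ) t₁, c₄ * ‖ξ t‖) ≤ r :=
        (ENNReal.ofReal_le_ofReal_iff hr).mp (h1 ▸ le_trans h2 h3)
      rw [MeasureTheory.integral_const_mul] at h4
      rw [le_div_iff₀' hR.c4pos]
      exact h4
    refine ⟨hL, ?_⟩
    have hftc : P t₁ - 1 = ∫ t in Set.Icc (0:ℝ) t₁, deriv P t := by
      rw [MeasureTheory.integral_Icc_eq_integral_Ioc,
        ← intervalIntegral.integral_of_le ht₁.1]
      have := intervalIntegral.integral_deriv_eq_sub
          (fun x _ => (hP.differentiable one_ne_zero).differentiableAt)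
          (hP'.intervalIntegrable 0 t₁)
      rw [hP0] at this
      exact this.symm
    have hIntd : IntegrableOn (deriv P) (Set.Icc (0:ℝ) t₁) := hP'.integrableOn_Icc
    calc ‖P t₁ - 1‖ = ‖∫ t in Set.Icc (0:ℝ) t₁, deriv P t‖ := by rw [hftc]
      _ ≤ ∫ t in Set.Icc (0:ℝ) t₁, ‖deriv P t‖ :=
          MeasureTheory.norm_integral_le_integral_norm _
      _ ≤ ∫ t in Set.Icc (0:ℝ) t₁, (3/2) * ‖ξ t‖ := by
          refine MeasureTheory.setIntegral_mono_on hIntd.norm (hInt.const_mul _)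
            measurableSet_Icc (fun t ht => ?_)
          rw [hderiv_eq t (hunit t ht).1]
          calc ‖ξ t + ξ t * (P t - 1)‖ ≤ ‖ξ t‖ + ‖ξ t * (P t - 1)‖ := norm_add_le _ _
            _ ≤ ‖ξ t‖ + ‖ξ t‖ * ‖P t - 1‖ := by
                exact add_le_add_right (norm_mul_le _ _) _
            _ ≤ (3/2) * ‖ξ t‖ := by
                have := (hunit t ht).2
                nlinarith [norm_nonneg (ξ t)]
      _ = (3/2) * ∫ t in Set.Icc (0:ℝ) t₁, ‖ξ t‖ := MeasureTheory.integral_const_mul _ _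
      _ ≤ (3/2) * (r/c₄) := by linarith
  -- bootstrap: `P` stays invertible and close to the identity on all of `[0,1]`
  have hAll : ∀ t ∈ Set.Icc (0:ℝ) 1, IsUnit (P t) ∧ ‖P t - 1‖ < 1/2 := by
    by_contra hcon
    push_neg at hcon
    obtain ⟨t₀, ht₀, ht₀bad⟩ := hcon
    set B : Set ℝ := {t ∈ Set.Icc (0:ℝ) 1 | ¬ (IsUnit (P t) ∧ ‖P t - 1‖ < 1/2)} with hBdef
    have hBne : B.Nonempty := ⟨t₀, ht₀, fun h => absurd h.2 (not_lt.mpr (ht₀bad h.1))⟩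
    have hBclosed : IsClosed B := by
      have hBeq : B = Set.Icc (0:ℝ) 1 ∩
          ({t | (P t).det ≠ 0} ∩ {t | ‖P t - 1‖ < 1/2})ᶜ := by
        ext t
        simp only [hBdef, Set.mem_setOf_eq, Set.mem_sep_iff, Set.mem_inter_iff,
          Set.mem_compl_iff, Matrix.isUnit_iff_isUnit_det, isUnit_iff_ne_zero,
          not_and_or, not_not]
      rw [hBeq]
      refine isClosed_Icc.inter (IsOpen.isClosed_compl (IsOpen.inter ?_ ?_))
      · exact isOpen_ne.preimage hdet
      · exact isOpen_lt ((hPc.sub continuous_const).norm) continuous_const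
    set τ := sInf B with hτdef
    have hτB : τ ∈ B := hBclosed.csInf_mem hBne ⟨0, fun x hx => hx.1.1⟩
    have hτ0 : 0 < τ := by
      rcases lt_or_eq_of_le hτB.1.1 with h | h
      · exact h
      · exfalso
        refine hτB.2 ?_
        rw [← h, hP0]
        refine ⟨isUnit_one, ?_⟩
        simp only [sub_self, norm_zero]
        norm_num
    have hlt : ∀ t ∈ Set.Ico (0:ℝ) τ, IsUnit (P t) ∧ ‖P t - 1‖ < 1/2 := by
      intro t ht
      by_contra h
      have : τ ≤ t := csInf_le ⟨0, fun x hx => hx.1.1⟩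
        ⟨⟨ht.1, le_trans ht.2.le hτB.1.2⟩, h⟩
      linarith [ht.2]
    have hbound : ∀ t₁ ∈ Set.Ico (0:ℝ) τ, ‖P t₁ - 1‖ ≤ (3/2) * (r/c₄) := by
      intro t₁ ht₁
      exact (key t₁ ⟨ht₁.1, le_trans ht₁.2.le hτB.1.2⟩
        (fun t ht => hlt t ⟨ht.1, lt_of_le_of_lt ht.2 ht₁.2⟩)).2
    have hτbound : ‖P τ - 1‖ ≤ (3/2) * (r/c₄) := by
      have hcont : Filter.Tendsto (fun t => ‖P t - 1‖) (nhdsWithin τ (Set.Iio τ))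
          (nhds ‖P τ - 1‖) :=
        (((hPc.sub continuous_const).norm).tendsto τ).mono_left nhdsWithin_le_nhds
      haveI : (nhdsWithin τ (Set.Iio τ)).NeBot := nhdsLT_neBot τ
      refine le_of_tendsto hcont ?_
      refine Filter.mem_of_superset (Ioo_mem_nhdsLT_of_mem ⟨hτ0, le_refl τ⟩) ?_
      intro t ht
      exact hbound t ⟨ht.1.le, ht.2⟩
    have hquarter : ‖P τ - 1‖ < 1/2 := lt_of_le_of_lt hτbound (by linarith)
    refine hτB.2 ⟨?_, hquarter⟩
    refine isUnit_of_norm_one_sub_lt ?_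
    rw [norm_sub_rev]
    linarith
  -- global estimates
  have hgbound : ∀ t ∈ Set.Icc (0:ℝ) 1, ‖P t - 1‖ ≤ (3/2) * (r/c₄) := fun t ht =>
    (key t ht (fun s hs => hAll s ⟨hs.1, le_trans hs.2 ht.2⟩)).2
  have hLtot : ∫ t in Set.Icc (0:ℝ) 1, ‖ξ t‖ ≤ r / c₄ :=
    (key 1 ⟨zero_le_one, le_rfl⟩ (fun t ht => hAll t ht)).1
  have hcontinv : ContinuousOn (fun t => (P t)⁻¹) (Set.Icc (0:ℝ) 1) := by
    have h := (hdet.continuousOn.inv₀ (fun t ht =>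
      isUnit_iff_ne_zero.mp ((Matrix.isUnit_iff_isUnit_det _).mp (hAll t ht).1))).smul
      hadj.continuousOn
    exact h.congr fun t _ => by rw [Matrix.inv_def, Ring.inverse_eq_inv']; rfl
  have hcontξ : ContinuousOn ξ (Set.Icc (0:ℝ) 1) := hP'.continuousOn.mul hcontinv
  have hcontη : ContinuousOn η (Set.Icc (0:ℝ) 1) := devProj_cont.comp_continuousOn hcontξ
  have hIntξ : IntegrableOn ξ (Set.Icc (0:ℝ) 1) :=
    ContinuousOn.integrableOn_compact isCompact_Icc hcontξ
  have hIntη : IntegrableOn η (Set.Icc (0:ℝ) 1) :=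
    ContinuousOn.integrableOn_compact isCompact_Icc hcontη
  have hηmem : ∀ t, η t ∈ Dev d := fun t => devProj_mem hd _
  have hηξ : η =ᵐ[volume.restrict (Set.Icc (0:ℝ) 1)] ξ :=
    haeDev.mono fun t ht => devProj_eq_self ht
  set A₀ : Mat d := ∫ t in Set.Icc (0:ℝ) 1, η t with hA₀def
  -- A₀ is deviatoric
  have hA₀Dev : A₀ ∈ Dev d := by
    have htrCLM : Continuous fun A : Mat d => A.trace := continuous_id.matrix_trace
    have htranspCLM : Continuous fun A : Mat d => Aᵀ := continuous_id.matrix_transpose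
    constructor
    · set L : Mat d →L[ℝ] Mat d :=
        { toLinearMap :=
            { toFun := fun A => Aᵀ
              map_add' := fun a b => Matrix.transpose_add a b
              map_smul' := fun c a => Matrix.transpose_smul c a }
          cont := htranspCLM } with hLdef
      have h1 : A₀ᵀ = L A₀ := rfl
      rw [h1, hA₀def]
      refine (ContinuousLinearMap.integral_comp_comm L hIntη).symm.trans ?_
      refine MeasureTheory.integral_congr_ae (Filter.Eventually.of_forall fun t => ?_)
      exact (hηmem t).1
    · set L : Mat d →L[ℝ] ℝ :=
        { toLinearMap := Matrix.traceLinearMap (Fin d) ℝ ℝ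
          cont := htrCLM } with hLdef
      have h1 : A₀.trace = L A₀ := rfl
      rw [h1, hA₀def]
      refine (ContinuousLinearMap.integral_comp_comm L hIntη).symm.trans ?_
      have h2 : ∀ t, L (η t) = 0 := fun t => (hηmem t).2
      refine MeasureTheory.integral_eq_zero_of_ae (Filter.Eventually.of_forall fun t => ?_)
      exact h2 t
  -- Jensen's inequality
  haveI hfin : IsFiniteMeasure (volume.restrict (Set.Icc (0:ℝ) 1)) := by
    constructor
    rw [MeasureTheory.Measure.restrict_apply_univ, Real.volume_Icc]
    exact ENNReal.ofReal_lt_top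
  haveI hnz : NeZero (volume.restrict (Set.Icc (0:ℝ) 1)) := by
    constructor
    refine MeasureTheory.Measure.measure_univ_ne_zero.mp ?_
    rw [MeasureTheory.Measure.restrict_apply_univ, Real.volume_Icc]
    norm_num
  have hIntRη : IntegrableOn (fun t => Rdev (η t)) (Set.Icc (0:ℝ) 1) := by
    refine ContinuousOn.integrableOn_compact isCompact_Icc ?_
    exact (Rdev_contOn hR).comp hcontη (fun t _ => hηmem t)
  have hJ : Rdev A₀ ≤ ∫ t in Set.Icc (0:ℝ) 1, Rdev (η t) := by
    have h := hR.convexOn.map_average_le (Rdev_contOn hR) devClosed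
      (Filter.Eventually.of_forall fun t => hηmem t) hIntη hIntRη
    rw [MeasureTheory.average_eq, MeasureTheory.average_eq,
      MeasureTheory.measureReal_restrict_apply_univ, Real.volume_real_Icc] at h
    simpa using h
  have hRη_le : ∫ t in Set.Icc (0:ℝ) 1, Rdev (η t) ≤ r := by
    have h1 : ENNReal.ofReal (∫ t in Set.Icc (0:ℝ) 1, Rdev (η t)) =
        ∫⁻ t in Set.Icc (0:ℝ) 1, ENNReal.ofReal (Rdev (η t)) :=
      MeasureTheory.ofReal_integral_eq_lintegral_ofReal hIntRη
        (Filter.Eventually.of_forall fun t => hR.nonneg _ (hηmem t))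
    have h2 : ∫⁻ t in Set.Icc (0:ℝ) 1, ENNReal.ofReal (Rdev (η t)) ≤
        ∫⁻ t in Set.Icc (0:ℝ) 1, Rext Rdev (ξ t) := by
      refine MeasureTheory.lintegral_mono_ae (haeDev.mono fun t ht => ?_)
      simp only [Rext, if_pos ht, devProj_eq_self ht, hηdef]
      exact le_refl _
    exact (ENNReal.ofReal_le_ofReal_iff hr).mp (h1 ▸ le_trans h2 hcost)
  -- closeness of A₀ to the endpoint displacement
  have hftc : P 1 - 1 = ∫ t in Set.Icc (0:ℝ) 1, deriv P t := by
    rw [MeasureTheory.integral_Icc_eq_integral_Ioc,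
      ← intervalIntegral.integral_of_le zero_le_one]
    have := intervalIntegral.integral_deriv_eq_sub
        (fun x _ => (hP.differentiable one_ne_zero).differentiableAt)
        (hP'.intervalIntegrable 0 1)
    rw [hP0] at this
    exact this.symm
  have hIntd : IntegrableOn (deriv P) (Set.Icc (0:ℝ) 1) := hP'.integrableOn_Icc
  have hIntmul : IntegrableOn (fun t => ‖ξ t * (P t - 1)‖) (Set.Icc (0:ℝ) 1) := by
    refine ContinuousOn.integrableOn_compact isCompact_Icc ?_
    exact (hcontξ.mul ((hPc.sub continuous_const).continuousOn)).norm
  have hclose : ‖A₀ - (P 1 - 1)‖ ≤ (3/2) * (r/c₄)^2 := by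
    have heq : A₀ - (P 1 - 1) = ∫ t in Set.Icc (0:ℝ) 1, (η t - deriv P t) := by
      rw [hftc, hA₀def, ← MeasureTheory.integral_sub hIntη hIntd]
    rw [heq]
    have hnormeq : (fun t => ‖η t - deriv P t‖) =ᵐ[volume.restrict (Set.Icc (0:ℝ) 1)]
        (fun t => ‖ξ t * (P t - 1)‖) := by
      filter_upwards [hηξ, MeasureTheory.ae_restrict_mem measurableSet_Icc] with t ht htmem
      rw [ht, hderiv_eq t (hAll t htmem).1]
      have : ξ t - (ξ t + ξ t * (P t - 1)) = -(ξ t * (P t - 1)) := by abel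
      rw [this, norm_neg]
    calc ‖∫ t in Set.Icc (0:ℝ) 1, (η t - deriv P t)‖
        ≤ ∫ t in Set.Icc (0:ℝ) 1, ‖η t - deriv P t‖ :=
          MeasureTheory.norm_integral_le_integral_norm _
      _ = ∫ t in Set.Icc (0:ℝ) 1, ‖ξ t * (P t - 1)‖ :=
          MeasureTheory.integral_congr_ae hnormeq
      _ ≤ ∫ t in Set.Icc (0:ℝ) 1, ((3/2) * (r/c₄)) * ‖ξ t‖ := by
          refine MeasureTheory.setIntegral_mono_on hIntmul
            (((ContinuousOn.integrableOn_compact isCompact_Icc hcontξ.norm)).const_mul _)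
            measurableSet_Icc (fun t ht => ?_)
          calc ‖ξ t * (P t - 1)‖ ≤ ‖ξ t‖ * ‖P t - 1‖ := norm_mul_le _ _
            _ ≤ ‖ξ t‖ * ((3/2) * (r/c₄)) :=
                mul_le_mul_of_nonneg_left (hgbound t ht) (norm_nonneg _)
            _ = ((3/2) * (r/c₄)) * ‖ξ t‖ := mul_comm _ _
      _ = ((3/2) * (r/c₄)) * ∫ t in Set.Icc (0:ℝ) 1, ‖ξ t‖ :=
          MeasureTheory.integral_const_mul _ _
      _ ≤ ((3/2) * (r/c₄)) * (r/c₄) := by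
          refine mul_le_mul_of_nonneg_left hLtot (by positivity)
      _ = (3/2) * (r/c₄)^2 := by ring
  exact ⟨A₀, hA₀Dev, le_trans hJ hRη_le, hclose⟩

end GammaLiminfAux

/-- **Lemma 3.4, Γ-liminf part (for the rescaled dissipation distance on matrices).**
For every `(z,ẑ)` and every sequence `(z_ε,ẑ_ε) → (z,ẑ)`:
`D₀(z,ẑ) = R(ẑ−z) ≤ liminf_{ε→0} ε⁻¹ D(I+εz_ε, I+εẑ_ε)`. -/
theorem dissipation_distance_Gamma_liminf
    {d : ℕ} (Rdev : Mat d → ℝ) (c₄ c₅ c₆ : ℝ) (K : Set (Mat d))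
    (hR : DissAss d Rdev c₄ c₅)
    (hc₆ : 0 < c₆)
    (hKcomp : IsCompact K) (hKSL : K ⊆ SLg d)
    (hKnbhd : ∃ ρ > (0 : ℝ), {P ∈ SLg d | ‖P - 1‖ < ρ} ⊆ K)
    -- the effective-domain bounds `D(P,Q) ≤ c₆` and `D(I,P) ≤ c₆|P−I|` on `K`
    (hDbd : ∀ P ∈ K, ∀ Q ∈ K, DistD Rdev P Q ≤ ENNReal.ofReal c₆)
    (hDlin : ∀ P ∈ K, DistI Rdev P ≤ ENNReal.ofReal (c₆ * ‖P - 1‖)) :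
    ∀ z zh : Mat d, ∀ (ε : ℕ → ℝ) (zs zsh : ℕ → Mat d),
      (∀ n, 0 < ε n) → Tendsto ε atTop (𝓝 0) →
      Tendsto zs atTop (𝓝 z) → Tendsto zsh atTop (𝓝 zh) →
      Rext Rdev (zh - z) ≤
        Filter.liminf (fun n =>
          ENNReal.ofReal ((ε n)⁻¹) *
            DistD Rdev (1 + ε n • zs n) (1 + ε n • zsh n)) atTop := by
  intro z zh ε zs zsh hεpos hε0 hzs hzsh
  rcases Nat.eq_zero_or_pos d with hd0 | hd
  · -- trivial case `d = 0`
    subst hd0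
    have hzz : zh - z = (0 : Mat 0) := Subsingleton.elim _ _
    have hR0 : Rdev (0 : Mat 0) = 0 := by
      have := hR.hom 0 le_rfl 0 devZero_mem
      simpa using this
    have h0 : Rext Rdev (zh - z) = 0 := by
      rw [hzz]
      simp only [Rext, if_pos (devZero_mem (d := 0))]
      rw [hR0, ENNReal.ofReal_zero]
    rw [h0]
    exact zero_le
  by_contra hcon
  rw [not_le] at hcon
  obtain ⟨b, hb0, hb1, hb2⟩ := ENNReal.lt_iff_exists_real_btwn.mp hcon
  refine absurd ?_ (not_le.mpr hb2)
  have hc4ne : c₄ ≠ 0 := hR.c4pos.ne'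
  -- a subsequence along which the rescaled dissipation is `< b`
  have hfreq := Filter.frequently_lt_of_liminf_lt (u := fun n =>
      ENNReal.ofReal ((ε n)⁻¹) * DistD Rdev (1 + ε n • zs n) (1 + ε n • zsh n)) (h := hb1)
  obtain ⟨φ, hφmono, hφ⟩ := Filter.extraction_of_frequently_atTop hfreq
  have hεφ0 : Tendsto (fun k => ε (φ k)) atTop (𝓝 0) := hε0.comp hφmono.tendsto_atTop
  have hzsφ : Tendsto (fun k => zs (φ k)) atTop (𝓝 z) := hzs.comp hφmono.tendsto_atTop
  have hzshφ : Tendsto (fun k => zsh (φ k)) atTop (𝓝 zh) := hzsh.comp hφmono.tendsto_atTop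
  set C : ℕ → Mat d := fun k => 1 + ε (φ k) • zs (φ k) with hCdef
  have hC1 : Tendsto C atTop (𝓝 1) := by
    have := (tendsto_const_nhds (x := (1 : Mat d)) (f := atTop)).add (hεφ0.smul hzsφ)
    simpa using this
  have hdetcont : Continuous fun A : Mat d => A.det := continuous_id.matrix_det
  have hadjcont : Continuous fun A : Mat d => A.adjugate := continuous_id.matrix_adjugate
  have hCinv : Tendsto (fun k => (C k)⁻¹) atTop (𝓝 1) := by
    have hdetC : Tendsto (fun k => (C k).det) atTop (𝓝 (1 : ℝ)) := by
      have := (hdetcont.tendsto 1).comp hC1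
      simpa [Function.comp_def] using this
    have hadjC : Tendsto (fun k => (C k).adjugate) atTop (𝓝 (1 : Mat d)) := by
      have := (hadjcont.tendsto 1).comp hC1
      simpa [Matrix.adjugate_one, Function.comp_def] using this
    have h1 : Tendsto (fun k => ((C k).det)⁻¹ • (C k).adjugate) atTop
        (𝓝 ((1:ℝ)⁻¹ • (1 : Mat d))) := (hdetC.inv₀ one_ne_zero).smul hadjC
    have h2 : (fun k => (C k)⁻¹) = fun k => ((C k).det)⁻¹ • (C k).adjugate := by
      funext k; rw [Matrix.inv_def, Ring.inverse_eq_inv']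
    rw [h2]
    simpa using h1
  set W : ℕ → Mat d := fun k => (zsh (φ k) - zs (φ k)) * (C k)⁻¹ with hWdef
  have hW : Tendsto W atTop (𝓝 (zh - z)) := by
    have := (hzshφ.sub hzsφ).mul hCinv
    simpa using this
  -- eventual smallness conditions
  have hev1 : ∀ᶠ k in atTop, ‖(1 : Mat d) - C k‖ < 1 := by
    have h : Tendsto (fun k => ‖(1 : Mat d) - C k‖) atTop (𝓝 0) := by
      have := (tendsto_const_nhds (x := (1 : Mat d)) (f := atTop)).sub hC1
      simpa using this.norm
    exact h.eventually_lt_const one_pos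
  have hev2 : ∀ᶠ k in atTop, (ε (φ k) * b) / c₄ ≤ 1/6 := by
    have h : Tendsto (fun k => (ε (φ k) * b) / c₄) atTop (𝓝 0) := by
      have := (hεφ0.mul_const b).div_const c₄
      simpa using this
    exact (h.eventually_lt_const (by norm_num : (0:ℝ) < 1/6)).mono fun k hk => hk.le
  -- main step: extract nearly-optimal paths and apply the core estimate
  have key : ∀ᶠ k in atTop, ∃ Bm, Bm ∈ Dev d ∧ Rdev Bm ≤ b ∧
      ‖Bm - W k‖ ≤ (3/2) * ε (φ k) * (b/c₄)^2 := by
    filter_upwards [hev1, hev2] with k hk1 hk2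
    have hεk : 0 < ε (φ k) := hεpos _
    have hCunit : IsUnit (C k) := isUnit_of_norm_one_sub_lt hk1
    have hn := hφ k
    have hD : DistD Rdev (1 + ε (φ k) • zs (φ k)) (1 + ε (φ k) • zsh (φ k)) <
        ENNReal.ofReal (ε (φ k) * b) := by
      have hne0 : (ENNReal.ofReal (ε (φ k))) ≠ 0 := by
        simp [ENNReal.ofReal_eq_zero, not_le, hεk]
      have hnetop : (ENNReal.ofReal (ε (φ k))) ≠ ⊤ := ENNReal.ofReal_ne_top
      have h := ENNReal.mul_lt_mul_right hne0 hnetop hn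
      have heq : ENNReal.ofReal (ε (φ k)) * (ENNReal.ofReal ((ε (φ k))⁻¹) *
          DistD Rdev (1 + ε (φ k) • zs (φ k)) (1 + ε (φ k) • zsh (φ k))) =
          DistD Rdev (1 + ε (φ k) • zs (φ k)) (1 + ε (φ k) • zsh (φ k)) := by
        rw [← mul_assoc, ← ENNReal.ofReal_mul hεk.le, mul_inv_cancel₀ hεk.ne',
          ENNReal.ofReal_one, one_mul]
      have heq2 : ENNReal.ofReal (ε (φ k)) * ENNReal.ofReal b =
          ENNReal.ofReal (ε (φ k) * b) := (ENNReal.ofReal_mul hεk.le).symm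
      rw [heq, heq2] at h
      exact h
    rw [DistD, DistI] at hD
    simp only [iInf_lt_iff] at hD
    obtain ⟨P, hPd, hP0, hP1, hcostlt⟩ := hD
    obtain ⟨A, hADev, hARle, hAclose⟩ := core hd hR P hPd hP0 (ε (φ k) * b)
      (mul_nonneg hεk.le hb0) hk2 hcostlt.le
    have hdetCu : IsUnit (C k).det := (Matrix.isUnit_iff_isUnit_det _).mp hCunit
    have hP1W : P 1 - 1 = ε (φ k) • W k := by
      rw [hP1]
      have h1 : (1 + ε (φ k) • zsh (φ k)) * (C k)⁻¹ - 1 =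
          ((1 + ε (φ k) • zsh (φ k)) - C k) * (C k)⁻¹ := by
        rw [Matrix.sub_mul, Matrix.mul_nonsing_inv _ hdetCu]
      rw [show (1 + ε (φ k) • zsh (φ k)) * (1 + ε (φ k) • zs (φ k))⁻¹ - 1
          = ((1 + ε (φ k) • zsh (φ k)) - C k) * (C k)⁻¹ from h1]
      have h2 : (1 + ε (φ k) • zsh (φ k)) - C k = ε (φ k) • (zsh (φ k) - zs (φ k)) := by
        rw [hCdef, smul_sub]
        beta_reduce
        abel
      rw [h2, smul_mul_assoc]
    refine ⟨(ε (φ k))⁻¹ • A, devSmul_mem _ hADev, ?_, ?_⟩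
    · rw [hR.hom _ (inv_nonneg.mpr hεk.le) _ hADev]
      calc (ε (φ k))⁻¹ * Rdev A ≤ (ε (φ k))⁻¹ * (ε (φ k) * b) :=
          mul_le_mul_of_nonneg_left hARle (inv_nonneg.mpr hεk.le)
        _ = b := by field_simp
    · have h3 : (ε (φ k))⁻¹ • A - W k = (ε (φ k))⁻¹ • (A - (P 1 - 1)) := by
        rw [hP1W, smul_sub, smul_smul, inv_mul_cancel₀ hεk.ne', one_smul]
      rw [h3, norm_smul, Real.norm_eq_abs, abs_of_pos (inv_pos.mpr hεk)]
      calc (ε (φ k))⁻¹ * ‖A - (P 1 - 1)‖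
          ≤ (ε (φ k))⁻¹ * ((3/2) * ((ε (φ k) * b)/c₄)^2) :=
            mul_le_mul_of_nonneg_left hAclose (inv_nonneg.mpr hεk.le)
        _ = (3/2) * ε (φ k) * (b/c₄)^2 := by
            field_simp
  -- pass to the limit
  obtain ⟨K0, hK0⟩ := eventually_atTop.mp key
  set Bs : ℕ → Mat d := fun k => if h : K0 ≤ k then (hK0 k h).choose else 0 with hBsdef
  have hBs : ∀ k, K0 ≤ k → Bs k ∈ Dev d ∧ Rdev (Bs k) ≤ b ∧
      ‖Bs k - W k‖ ≤ (3/2) * ε (φ k) * (b/c₄)^2 := by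
    intro k hk
    simp only [hBsdef, dif_pos hk]
    exact (hK0 k hk).choose_spec
  have he0 : Tendsto (fun k => (3/2) * ε (φ k) * (b/c₄)^2) atTop (𝓝 0) := by
    have := (hεφ0.const_mul (3/2 : ℝ)).mul_const ((b/c₄)^2)
    simpa using this
  have hnormBW : Tendsto (fun k => ‖Bs k - W k‖) atTop (𝓝 0) :=
    squeeze_zero' (Filter.Eventually.of_forall fun k => norm_nonneg _)
      (eventually_atTop.mpr ⟨K0, fun k hk => (hBs k hk).2.2⟩) he0
  have hBW : Tendsto (fun k => Bs k - W k) atTop (𝓝 0) :=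
    tendsto_zero_iff_norm_tendsto_zero.mpr hnormBW
  have hBtend : Tendsto Bs atTop (𝓝 (zh - z)) := by
    have := hBW.add hW
    simpa using this
  have hmem : zh - z ∈ Dev d :=
    devClosed.mem_of_tendsto hBtend (eventually_atTop.mpr ⟨K0, fun k hk => (hBs k hk).1⟩)
  have hRle : Rdev (zh - z) ≤ b := by
    have htend : Tendsto (fun k => b + c₅ * ‖zh - z - Bs k‖) atTop (𝓝 (b + c₅ * 0)) := by
      refine tendsto_const_nhds.add (Tendsto.const_mul _ ?_)
      have h : Tendsto (fun k => zh - z - Bs k) atTop (𝓝 0) := by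
        have := (tendsto_const_nhds (x := zh - z) (f := atTop)).sub hBtend
        simpa using this
      simpa using h.norm
    have hev : ∀ᶠ k in atTop, Rdev (zh - z) ≤ b + c₅ * ‖zh - z - Bs k‖ :=
      eventually_atTop.mpr ⟨K0, fun k hk =>
        le_trans (Rdev_lip hR hmem (hBs k hk).1) (add_le_add_left (hBs k hk).2.1 _)⟩
    have := ge_of_tendsto htend hev
    simpa using this
  simp only [Rext, if_pos hmem]
  exact ENNReal.ofReal_le_ofReal hRle

end LinPlast
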